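/- Let d ≥ 3 and let M = {M_1, …, M_d} be a 1-factorization of the hypercube Q_d. Suppose x, y, v, w is a 4-cycle in Q_d with edges xy and vw in matching M_s and edges vy and xw in matching M_t (s ≠ t), and let M' be the 1-factorization obtained from M by the switch on this 4-cycle, i.e. M'_s = (M_s ∪ {vy, xw}) \ {xy, vw}, M'_t = (M_t ∪ {xy, vw}) \ {vy, xw}, and M'_i = M_i for i ≠ s, t. Then sign(M') = sign(M). -/

import Mathlib

open SimpleGraph

/-- The hypercube graph `Q_d`: vertices are subsets of `{1,…,d}`, two subsets adjacent
iff they differ in exactly one element. -/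
def cube (d : ℕ) : SimpleGraph (Finset (Fin d)) where
  Adj u v := (symmDiff u v).card = 1
  symm := ⟨fun u v h => by rwa [symmDiff_comm]⟩
  loopless := ⟨fun u h => by simp [symmDiff_self] at h⟩

/-- `M` is a perfect matching of `G` (as a set of edges): `M` consists of edges of `G`
and every vertex lies in a unique edge of `M`. -/
def IsPM {V : Type*} (G : SimpleGraph V) (M : Set (Sym2 V)) : Prop :=
  M ⊆ G.edgeSet ∧ ∀ v : V, ∃! e, e ∈ M ∧ v ∈ e

/-- `M` is a 1-factorization of `G`: a partition of the edge set of `G` into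
perfect matchings. -/
def IsFactorization {V : Type*} {ι : Type*} (G : SimpleGraph V) (M : ι → Set (Sym2 V)) : Prop :=
  (∀ i, IsPM G (M i)) ∧ (∀ i j, i ≠ j → Disjoint (M i) (M j)) ∧ (⋃ i, M i) = G.edgeSet

/-- The edge set `E` forms a Hamilton cycle: there is a Hamiltonian cycle in the graph
with edge set `E` which uses every edge of `E`. -/
def IsHamCycleSet {V : Type*} [DecidableEq V] (E : Set (Sym2 V)) : Prop :=
  ∃ (v : V) (w : (SimpleGraph.fromEdgeSet E).Walk v v),
    w.IsHamiltonianCycle ∧ ∀ e ∈ E, e ∈ w.edges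

/-- The even vertices of `Q_d`. -/
abbrev EvenVertex (d : ℕ) := {v : Finset (Fin d) // Even v.card}

/-- The odd vertices of `Q_d`. -/
abbrev OddVertex (d : ℕ) := {v : Finset (Fin d) // ¬ Even v.card}

/-- The bijection `f` from the odd vertices to the even vertices represents the perfect
matching `M`: it sends every odd vertex to its partner in `M`. -/
def Represents {d : ℕ} (M : Set (Sym2 (Finset (Fin d)))) (f : OddVertex d ≃ EvenVertex d) : Prop :=
  ∀ x : OddVertex d, s(x.val, (f x).val) ∈ M

/-- The sign of a 1-factorization, given as the family of bijections (odd → even)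
representing its matchings: the product over all pairs `i < j` of the signs of the
permutations `M_i ∘ M_j⁻¹` of the even vertices. -/
noncomputable def factorizationSign {d : ℕ} (f : Fin d → (OddVertex d ≃ EvenVertex d)) : ℤˣ :=
  ∏ p ∈ Finset.univ.filter (fun p : Fin d × Fin d => p.1 < p.2),
    Equiv.Perm.sign ((f p.2).symm.trans (f p.1))

lemma pm_unique {V : Type*} {G : SimpleGraph V} {M : Set (Sym2 V)} (h : IsPM G M)
    {e e' : Sym2 V} {v : V} (he : e ∈ M) (hv : v ∈ e) (he' : e' ∈ M) (hv' : v ∈ e') : e = e' := by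
  obtain ⟨u, _, hu⟩ := h.2 v
  rw [hu e ⟨he, hv⟩, hu e' ⟨he', hv'⟩]

lemma partner_eq {d : ℕ} {M : Set (Sym2 (Finset (Fin d)))} (hPM : IsPM (cube d) M)
    {f : OddVertex d ≃ EvenVertex d} (hf : Represents M f) (z : OddVertex d) {b : Finset (Fin d)}
    (hb : s(z.val, b) ∈ M) : (f z).val = b := by
  have h := pm_unique hPM (hf z) (Sym2.mem_mk_left _ _) hb (Sym2.mem_mk_left _ _)
  exact Sym2.congr_right.mp h

lemma reps_eq {d : ℕ} {M : Set (Sym2 (Finset (Fin d)))} (hPM : IsPM (cube d) M)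
    {f g : OddVertex d ≃ EvenVertex d} (hf : Represents M f) (hg : Represents M g) : f = g := by
  apply Equiv.ext
  intro z
  exact Subtype.ext (partner_eq hPM hf z (hg z))

lemma symmdiff_card {d : ℕ} (u v : Finset (Fin d)) :
    u.card + v.card = (symmDiff u v).card + 2 * (u ∩ v).card := by
  rw [symmDiff_def]
  have hd : Disjoint (u \ v) (v \ u) := disjoint_sdiff_sdiff
  rw [Finset.sup_eq_union, Finset.card_union_of_disjoint hd]
  have h1 := Finset.card_sdiff_add_card_inter u v
  have h2 := Finset.card_sdiff_add_card_inter v u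
  rw [Finset.inter_comm v u] at h2
  omega

lemma cube_adj_parity {d : ℕ} {u v : Finset (Fin d)} (h : (cube d).Adj u v) :
    (Even u.card ↔ ¬ Even v.card) := by
  have h1 : (symmDiff u v).card = 1 := h
  have h2 := symmdiff_card u v
  rw [Nat.even_iff, Nat.even_iff]
  omega

lemma switch_mem {α : Type*} {A : Set (Sym2 α)} {p q r u e : Sym2 α}
    (h : e ∈ (A ∪ {p, q}) \ {r, u}) : (e ∈ A ∧ e ≠ r ∧ e ≠ u) ∨ e = p ∨ e = q := by
  obtain ⟨h1, h2⟩ := h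
  simp only [Set.mem_union, Set.mem_insert_iff, Set.mem_singleton_iff] at h1 h2
  push_neg at h2
  tauto

lemma corner {d : ℕ} {A A' : Set (Sym2 (Finset (Fin d)))} (hPM : IsPM (cube d) A)
    {f' : OddVertex d ≃ EvenVertex d} (hf' : Represents A' f') {p q r u : Sym2 (Finset (Fin d))}
    (hA' : A' = (A ∪ {p, q}) \ {r, u}) (z : OddVertex d) (b : Finset (Fin d))
    (hp : p = s(z.val, b)) (hzq : z.val ∉ q) (hr : r ∈ A) (hzr : z.val ∈ r) :
    (f' z).val = b := by
  have he := hf' z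
  rw [hA'] at he
  rcases switch_mem he with ⟨h1, h2, _⟩ | h | h
  · exact absurd (pm_unique hPM h1 (Sym2.mem_mk_left _ _) hr hzr) h2
  · rw [hp] at h
    exact Sym2.congr_right.mp h
  · exact absurd (h ▸ Sym2.mem_mk_left _ _) hzq

lemma rep_untouched {d : ℕ} {A A' : Set (Sym2 (Finset (Fin d)))} (hPM : IsPM (cube d) A)
    {f f' : OddVertex d ≃ EvenVertex d} (hf : Represents A f) (hf' : Represents A' f')
    {p q r u : Sym2 (Finset (Fin d))}
    (hA' : A' = (A ∪ {p, q}) \ {r, u}) (z : OddVertex d)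
    (hzp : z.val ∉ p) (hzq : z.val ∉ q) : f' z = f z := by
  have he := hf' z
  rw [hA'] at he
  rcases switch_mem he with ⟨h1, _, _⟩ | h | h
  · exact Subtype.ext (Sym2.congr_right.mp
      (pm_unique hPM h1 (Sym2.mem_mk_left _ _) (hf z) (Sym2.mem_mk_left _ _)))
  · exact absurd (h ▸ Sym2.mem_mk_left _ _) hzp
  · exact absurd (h ▸ Sym2.mem_mk_left _ _) hzq

lemma not_partner {d : ℕ} {A : Set (Sym2 (Finset (Fin d)))} (hPM : IsPM (cube d) A)
    {f : OddVertex d ≃ EvenVertex d} (hf : Represents A f) (z : OddVertex d)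
    {b c : Finset (Fin d)} (hbc : s(b, c) ∈ A) (hzb : z.val ≠ b) (hzc : z.val ≠ c) :
    (f z).val ≠ b := by
  intro h
  have h1 : s(z.val, b) ∈ A := h ▸ hf z
  have h2 := pm_unique hPM h1 (Sym2.mem_mk_right _ _) hbc (Sym2.mem_mk_left _ _)
  rw [Sym2.eq_iff] at h2
  tauto

lemma units_cancel (a b : ℤˣ) : (a * b) * b = a := by
  rw [mul_assoc, Int.units_mul_self, mul_one]

lemma sign_eq_of_trans {d : ℕ} (f f' : Fin d → (OddVertex d ≃ EvenVertex d)) (s t : Fin d)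
    (hst : s ≠ t) (σ : Equiv.Perm (EvenVertex d))
    (hs : f' s = (f s).trans σ) (ht : f' t = (f t).trans σ)
    (ho : ∀ i, i ≠ s → i ≠ t → f' i = f i) :
    factorizationSign f' = factorizationSign f := by
  classical
  set S := Finset.univ.filter (fun p : Fin d × Fin d => p.1 < p.2) with hS
  set F : Fin d × Fin d → ℤˣ := fun p =>
    Equiv.Perm.sign ((f' p.2).symm.trans (f' p.1)) *
      Equiv.Perm.sign ((f p.2).symm.trans (f p.1)) with hF
  have key1 : ∀ i j : Fin d, (i = s ∨ i = t) → j ≠ s → j ≠ t →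
      F (i, j) = Equiv.Perm.sign σ := by
    intro i j hi hj1 hj2
    have hfj : f' j = f j := ho j hj1 hj2
    have hfi : f' i = (f i).trans σ := by rcases hi with rfl | rfl <;> assumption
    simp only [hF, hfj, hfi]
    rw [show (f j).symm.trans ((f i).trans σ) = ((f j).symm.trans (f i)).trans σ from
      (Equiv.trans_assoc _ _ _).symm, Equiv.Perm.sign_trans]
    exact units_cancel _ _
  have key2 : ∀ i j : Fin d, (j = s ∨ j = t) → i ≠ s → i ≠ t →
      F (i, j) = Equiv.Perm.sign σ := by
    intro i j hj hi1 hi2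
    have hfi : f' i = f i := ho i hi1 hi2
    have hfj : f' j = (f j).trans σ := by rcases hj with rfl | rfl <;> assumption
    simp only [hF, hfi, hfj]
    rw [show ((f j).trans σ).symm.trans (f i) = σ.symm.trans ((f j).symm.trans (f i)) from
      Equiv.ext fun _ => rfl, Equiv.Perm.sign_trans, Equiv.Perm.sign_symm]
    rw [mul_comm _ (Equiv.Perm.sign σ)]
    exact units_cancel _ _
  have keyb : ∀ i j : Fin d, (i = s ∨ i = t) → (j = s ∨ j = t) → F (i, j) = 1 := by
    intro i j hi hj
    have hfi : f' i = (f i).trans σ := by rcases hi with rfl | rfl <;> assumption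
    have hfj : f' j = (f j).trans σ := by rcases hj with rfl | rfl <;> assumption
    simp only [hF, hfi, hfj]
    rw [show ((f j).trans σ).symm.trans ((f i).trans σ)
        = σ.symm.trans (((f j).symm.trans (f i)).trans σ) from Equiv.ext fun _ => rfl,
      Equiv.Perm.sign_trans, Equiv.Perm.sign_trans, Equiv.Perm.sign_symm]
    rw [mul_comm (Equiv.Perm.sign σ)]
    rw [units_cancel]
    exact Int.units_mul_self _
  have keyn : ∀ i j : Fin d, i ≠ s → i ≠ t → j ≠ s → j ≠ t → F (i, j) = 1 := by
    intro i j hi1 hi2 hj1 hj2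
    simp only [hF, ho i hi1 hi2, ho j hj1 hj2, Int.units_mul_self]
  have keyall : ∀ i j : Fin d,
      F (i, j) = if ((i = s ∨ i = t) ↔ (j = s ∨ j = t)) then 1 else Equiv.Perm.sign σ := by
    intro i j
    by_cases hi : i = s ∨ i = t <;> by_cases hj : j = s ∨ j = t
    · rw [if_pos (by tauto)]; exact keyb i j hi hj
    · rw [if_neg (by tauto)]
      exact key1 i j hi (fun h => hj (Or.inl h)) (fun h => hj (Or.inr h))
    · rw [if_neg (by tauto)]
      exact key2 i j hj (fun h => hi (Or.inl h)) (fun h => hi (Or.inr h))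
    · rw [if_pos (by tauto)]
      exact keyn i j (fun h => hi (Or.inl h)) (fun h => hi (Or.inr h))
        (fun h => hj (Or.inl h)) (fun h => hj (Or.inr h))
  set τ := Equiv.swap s t with hτ
  have hτpred : ∀ i : Fin d, (τ i = s ∨ τ i = t) ↔ (i = s ∨ i = t) := by
    intro i
    by_cases h1 : i = s
    · subst h1; simp [hτ, Equiv.swap_apply_left]
    by_cases h2 : i = t
    · subst h2; simp [hτ, Equiv.swap_apply_right]
    · rw [hτ, Equiv.swap_apply_of_ne_of_ne h1 h2]
  have hFsort : ∀ i j : Fin d, F (i, j) = F (j, i) := by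
    intro i j
    simp only [hF]
    rw [show (f i).symm.trans (f j) = ((f j).symm.trans (f i)).symm from Equiv.ext fun _ => rfl,
      show (f' i).symm.trans (f' j) = ((f' j).symm.trans (f' i)).symm from Equiv.ext fun _ => rfl,
      Equiv.Perm.sign_symm, Equiv.Perm.sign_symm]
  have hFτ : ∀ i j : Fin d, F (τ i, τ j) = F (i, j) := by
    intro i j
    rw [keyall, keyall]
    by_cases hc : ((i = s ∨ i = t) ↔ (j = s ∨ j = t))
    · rw [if_pos hc, if_pos (by rw [hτpred, hτpred]; exact hc)]
    · rw [if_neg hc, if_neg (by rw [hτpred, hτpred]; exact hc)]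
  -- the involution
  set g : ∀ p : Fin d × Fin d, p ∈ S → Fin d × Fin d := fun p _ =>
    if τ p.1 < τ p.2 then (τ p.1, τ p.2) else (τ p.2, τ p.1) with hg
  have hmemS : ∀ p : Fin d × Fin d, p ∈ S ↔ p.1 < p.2 := by
    intro p; simp [hS]
  have hne : ∀ p : Fin d × Fin d, p ∈ S → τ p.1 ≠ τ p.2 := by
    intro p hp
    exact fun h => absurd (τ.injective h) (ne_of_lt ((hmemS p).mp hp))
  have g_mem : ∀ p (hp : p ∈ S), g p hp ∈ S := by
    intro p hp
    rw [hmemS]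
    simp only [hg]
    split_ifs with h
    · exact h
    · exact ((hne p hp).lt_or_gt).resolve_left h
  have g_inv : ∀ p (hp : p ∈ S), g (g p hp) (g_mem p hp) = p := by
    intro p hp
    have hplt := (hmemS p).mp hp
    have hss : ∀ a : Fin d, τ (τ a) = a := fun a => Equiv.swap_apply_self s t a
    by_cases h : τ p.1 < τ p.2
    · simp only [hg, if_pos h]
      simp [hss, hplt]
    · simp only [hg, if_neg h]
      simp [hss, hplt, not_lt.mpr hplt.le]
  have hg1 : ∀ p (hp : p ∈ S), F p * F (g p hp) = 1 := by
    intro p hp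
    have : F (g p hp) = F p := by
      simp only [hg]
      split_ifs with h
      · rw [← Prod.mk.eta (p := p), hFτ]
      · rw [hFsort, ← Prod.mk.eta (p := p), hFτ]
    rw [this, Int.units_mul_self]
  have hg3 : ∀ p (hp : p ∈ S), F p ≠ 1 → g p hp ≠ p := by
    intro p hp hFp
    have hcond : ¬ ((p.1 = s ∨ p.1 = t) ↔ (p.2 = s ∨ p.2 = t)) := by
      intro hc
      apply hFp
      rw [← Prod.mk.eta (p := p), keyall, if_pos hc]
    intro hgp
    simp only [hg] at hgp
    -- derive a contradiction
    by_cases h1 : p.1 = s ∨ p.1 = t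
    · have h2 : ¬ (p.2 = s ∨ p.2 = t) := by tauto
      have hτ1 : τ p.1 ≠ p.1 := by
        rcases h1 with rfl | rfl
        · rw [hτ, Equiv.swap_apply_left]; exact Ne.symm hst
        · rw [hτ, Equiv.swap_apply_right]; exact hst
      have hτ2 : τ p.2 = p.2 := by
        rw [hτ, Equiv.swap_apply_of_ne_of_ne (fun h => h2 (Or.inl h)) (fun h => h2 (Or.inr h))]
      split_ifs at hgp with h
      · exact hτ1 (congrArg Prod.fst hgp)
      · have e1 : τ p.2 = p.1 := congrArg Prod.fst hgp
        rw [hτ2] at e1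
        exact absurd e1 (ne_of_gt ((hmemS p).mp hp))
    · have h2 : (p.2 = s ∨ p.2 = t) := by tauto
      have hτ2 : τ p.2 ≠ p.2 := by
        rcases h2 with rfl | rfl
        · rw [hτ, Equiv.swap_apply_left]; exact Ne.symm hst
        · rw [hτ, Equiv.swap_apply_right]; exact hst
      have hτ1 : τ p.1 = p.1 := by
        rw [hτ, Equiv.swap_apply_of_ne_of_ne (fun h => h1 (Or.inl h)) (fun h => h1 (Or.inr h))]
      split_ifs at hgp with h
      · exact hτ2 (congrArg Prod.snd hgp)
      · have e1 : τ p.1 = p.2 := congrArg Prod.snd hgp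
        rw [hτ1] at e1
        exact absurd e1 (ne_of_lt ((hmemS p).mp hp))
  have hprod : (∏ p ∈ S, F p) = 1 := Finset.prod_involution g hg1 hg3 g_mem g_inv
  have hsplit : (∏ p ∈ S, F p) = factorizationSign f' * factorizationSign f := by
    rw [factorizationSign, factorizationSign, ← Finset.prod_mul_distrib]
  rw [hsplit] at hprod
  have := eq_inv_of_mul_eq_one_left hprod
  rw [Int.units_inv_eq_self] at this
  exact this.symm ▸ rfl

lemma switch_sign_aux {d : ℕ}
    (M M' : Fin d → Set (Sym2 (Finset (Fin d))))
    (hM : IsFactorization (cube d) M)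
    (s t : Fin d) (hst : s ≠ t)
    (x y v w : Finset (Fin d))
    (hxy : (cube d).Adj x y) (hyv : (cube d).Adj y v)
    (hvw : (cube d).Adj v w) (hwx : (cube d).Adj w x)
    (hxv : x ≠ v) (hyw : y ≠ w)
    (hxyM : s(x, y) ∈ M s) (hvwM : s(v, w) ∈ M s)
    (hvyM : s(v, y) ∈ M t) (hxwM : s(x, w) ∈ M t)
    (hM's : M' s = (M s ∪ {s(v, y), s(x, w)}) \ {s(x, y), s(v, w)})
    (hM't : M' t = (M t ∪ {s(x, y), s(v, w)}) \ {s(v, y), s(x, w)})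
    (hM'i : ∀ i, i ≠ s → i ≠ t → M' i = M i)
    (f f' : Fin d → (OddVertex d ≃ EvenVertex d))
    (hf : ∀ i, Represents (M i) (f i)) (hf' : ∀ i, Represents (M' i) (f' i))
    (hx : Even x.card) :
    factorizationSign f' = factorizationSign f := by
  have PMs := hM.1 s
  have PMt := hM.1 t
  have hy : ¬ Even y.card := (cube_adj_parity hxy).mp hx
  have hv : Even v.card := by
    by_contra hc
    exact hy ((cube_adj_parity hyv).mpr hc)
  have hw : ¬ Even w.card := (cube_adj_parity hvw).mp hv
  set X : EvenVertex d := ⟨x, hx⟩ with hX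
  set V : EvenVertex d := ⟨v, hv⟩ with hV
  set Y : OddVertex d := ⟨y, hy⟩ with hY
  set W : OddVertex d := ⟨w, hw⟩ with hW
  set σ := Equiv.swap X V with hσ
  have hxny : x ≠ y := hxy.ne
  have hynv : y ≠ v := hyv.ne
  have hvnw : v ≠ w := hvw.ne
  have hwnx : w ≠ x := hwx.ne
  -- corner values of f
  have hfsY : (f s Y).val = x := partner_eq PMs (hf s) Y (by rw [Sym2.eq_swap] at hxyM; exact hxyM)
  have hfsW : (f s W).val = v := partner_eq PMs (hf s) W (by rw [Sym2.eq_swap] at hvwM; exact hvwM)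
  have hftY : (f t Y).val = v := partner_eq PMt (hf t) Y (by rw [Sym2.eq_swap] at hvyM; exact hvyM)
  have hftW : (f t W).val = x := partner_eq PMt (hf t) W (by rw [Sym2.eq_swap] at hxwM; exact hxwM)
  -- reordered versions of the switch descriptions
  have hM's2 : M' s = (M s ∪ {s(x, w), s(v, y)}) \ {s(v, w), s(x, y)} := by
    rw [hM's, Set.pair_comm (s(v, y)) (s(x, w)), Set.pair_comm (s(x, y)) (s(v, w))]
  have hM't2 : M' t = (M t ∪ {s(v, w), s(x, y)}) \ {s(x, w), s(v, y)} := by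
    rw [hM't, Set.pair_comm (s(x, y)) (s(v, w)), Set.pair_comm (s(v, y)) (s(x, w))]
  -- corner values of f'
  have hf'sY : (f' s Y).val = v :=
    corner PMs (hf' s) hM's Y v (Sym2.eq_swap)
      (by rw [Sym2.mem_iff]; push_neg; exact ⟨hxny.symm, hyw⟩) hxyM (Sym2.mem_mk_right _ _)
  have hf'sW : (f' s W).val = x :=
    corner PMs (hf' s) hM's2 W x (Sym2.eq_swap)
      (by rw [Sym2.mem_iff]; push_neg; exact ⟨hvnw.symm, hyw.symm⟩) hvwM (Sym2.mem_mk_right _ _)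
  have hf'tY : (f' t Y).val = x :=
    corner PMt (hf' t) hM't Y x (Sym2.eq_swap)
      (by rw [Sym2.mem_iff]; push_neg; exact ⟨hynv, hyw⟩) hvyM (Sym2.mem_mk_right _ _)
  have hf'tW : (f' t W).val = v :=
    corner PMt (hf' t) hM't2 W v (Sym2.eq_swap)
      (by rw [Sym2.mem_iff]; push_neg; exact ⟨hwnx, hyw.symm⟩) hxwM (Sym2.mem_mk_right _ _)
  -- f' s = (f s).trans σ
  have hfs : f' s = (f s).trans σ := by
    apply Equiv.ext
    intro z
    by_cases hzY : z = Y
    · subst hzY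
      apply Subtype.ext
      rw [hf'sY]
      have h1 : f s Y = X := Subtype.ext hfsY
      show v = (σ (f s Y)).val
      rw [h1, hσ, Equiv.swap_apply_left]
    · by_cases hzW : z = W
      · subst hzW
        apply Subtype.ext
        rw [hf'sW]
        have h1 : f s W = V := Subtype.ext hfsW
        show x = (σ (f s W)).val
        rw [h1, hσ, Equiv.swap_apply_right]
      · have hzy : z.val ≠ y := fun h => hzY (Subtype.ext h)
        have hzw : z.val ≠ w := fun h => hzW (Subtype.ext h)
        have hzx : z.val ≠ x := fun h => z.property (by rw [h]; exact hx)
        have hzv : z.val ≠ v := fun h => z.property (by rw [h]; exact hv)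
        have h1 : f' s z = f s z := rep_untouched PMs (hf s) (hf' s) hM's z
          (by rw [Sym2.mem_iff]; push_neg; exact ⟨hzv, hzy⟩)
          (by rw [Sym2.mem_iff]; push_neg; exact ⟨hzx, hzw⟩)
        have h2 : f s z ≠ X := fun h =>
          not_partner PMs (hf s) z hxyM hzx hzy (congrArg Subtype.val h)
        have h3 : f s z ≠ V := fun h =>
          not_partner PMs (hf s) z hvwM hzv hzw (congrArg Subtype.val h)
        rw [h1]
        show f s z = σ (f s z)
        rw [hσ, Equiv.swap_apply_of_ne_of_ne h2 h3]
  -- f' t = (f t).trans σ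
  have hft : f' t = (f t).trans σ := by
    apply Equiv.ext
    intro z
    by_cases hzY : z = Y
    · subst hzY
      apply Subtype.ext
      rw [hf'tY]
      have h1 : f t Y = V := Subtype.ext hftY
      show x = (σ (f t Y)).val
      rw [h1, hσ, Equiv.swap_apply_right]
    · by_cases hzW : z = W
      · subst hzW
        apply Subtype.ext
        rw [hf'tW]
        have h1 : f t W = X := Subtype.ext hftW
        show v = (σ (f t W)).val
        rw [h1, hσ, Equiv.swap_apply_left]
      · have hzy : z.val ≠ y := fun h => hzY (Subtype.ext h)
        have hzw : z.val ≠ w := fun h => hzW (Subtype.ext h)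
        have hzx : z.val ≠ x := fun h => z.property (by rw [h]; exact hx)
        have hzv : z.val ≠ v := fun h => z.property (by rw [h]; exact hv)
        have h1 : f' t z = f t z := rep_untouched PMt (hf t) (hf' t) hM't z
          (by rw [Sym2.mem_iff]; push_neg; exact ⟨hzx, hzy⟩)
          (by rw [Sym2.mem_iff]; push_neg; exact ⟨hzv, hzw⟩)
        have h2 : f t z ≠ X := fun h =>
          not_partner PMt (hf t) z hxwM hzx hzw (congrArg Subtype.val h)
        have h3 : f t z ≠ V := fun h =>
          not_partner PMt (hf t) z hvyM hzv hzy (congrArg Subtype.val h)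
        rw [h1]
        show f t z = σ (f t z)
        rw [hσ, Equiv.swap_apply_of_ne_of_ne h2 h3]
  have hother : ∀ i, i ≠ s → i ≠ t → f' i = f i := fun i h1 h2 =>
    reps_eq (hM.1 i) ((hM'i i h1 h2) ▸ hf' i) (hf i)
  exact sign_eq_of_trans f f' s t hst σ hfs hft hother

/-- A switch on a 4-cycle preserves the sign of a 1-factorization of `Q_d`. -/
theorem statement12 (d : ℕ) (hd : 3 ≤ d)
    (M M' : Fin d → Set (Sym2 (Finset (Fin d))))
    (hM : IsFactorization (cube d) M)
    (s t : Fin d) (hst : s ≠ t)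
    (x y v w : Finset (Fin d))
    (hxy : (cube d).Adj x y) (hyv : (cube d).Adj y v)
    (hvw : (cube d).Adj v w) (hwx : (cube d).Adj w x)
    (hxv : x ≠ v) (hyw : y ≠ w)
    (hxyM : s(x, y) ∈ M s) (hvwM : s(v, w) ∈ M s)
    (hvyM : s(v, y) ∈ M t) (hxwM : s(x, w) ∈ M t)
    (hM's : M' s = (M s ∪ {s(v, y), s(x, w)}) \ {s(x, y), s(v, w)})
    (hM't : M' t = (M t ∪ {s(x, y), s(v, w)}) \ {s(v, y), s(x, w)})
    (hM'i : ∀ i, i ≠ s → i ≠ t → M' i = M i)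
    (f f' : Fin d → (OddVertex d ≃ EvenVertex d))
    (hf : ∀ i, Represents (M i) (f i)) (hf' : ∀ i, Represents (M' i) (f' i)) :
    factorizationSign f' = factorizationSign f := by
  by_cases hx : Even x.card
  · exact switch_sign_aux M M' hM s t hst x y v w hxy hyv hvw hwx hxv hyw
      hxyM hvwM hvyM hxwM hM's hM't hM'i f f' hf hf' hx
  · -- apply with the roles (x, y, v, w) ↦ (y, x, w, v)
    have hy : Even y.card := by
      by_contra hc
      exact hx ((cube_adj_parity hxy).mpr hc)
    have e1 : ({s(w, x), s(y, v)} : Set (Sym2 (Finset (Fin d)))) = {s(v, y), s(x, w)} := by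
      rw [Set.pair_comm, @Sym2.eq_swap _ w x, @Sym2.eq_swap _ y v]
    have e2 : ({s(y, x), s(w, v)} : Set (Sym2 (Finset (Fin d)))) = {s(x, y), s(v, w)} := by
      rw [@Sym2.eq_swap _ y x, @Sym2.eq_swap _ w v]
    have hM's' : M' s = (M s ∪ {s(w, x), s(y, v)}) \ {s(y, x), s(w, v)} := by
      rw [hM's, e1, e2]
    have hM't' : M' t = (M t ∪ {s(y, x), s(w, v)}) \ {s(w, x), s(y, v)} := by
      rw [hM't, e1, e2]
    exact switch_sign_aux M M' hM s t hst y x w v hxy.symm hwx.symm hvw.symm hyv.symm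
      hyw hxv (by rwa [Sym2.eq_swap]) (by rwa [Sym2.eq_swap])
      (by rwa [Sym2.eq_swap]) (by rwa [Sym2.eq_swap]) hM's' hM't' hM'i f f' hf hf' hy
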